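/- arXiv:2401.06268 — 2 statements merged into one kernel-verified Lean document; each statement's English description precedes it below -/
import Mathlib

section
/- Let L ≥ 1 and let X_1, …, X_L be mutually independent Nakagami random variables, where X_l has shape m_l > 0 and scale Ω_l > 0, and suppose m_l > m_1 for every l = 2, …, L. Then for every s > 0, the moment generating function of the product satisfies E[exp(−s ∏_{l=1}^L X_l)] ≤ 2 (Γ(2m_1)/Γ(m_1)) · (∏_{l=2}^L Γ(m_l − m_1)/Γ(m_l)) · (∏_{l=1}^L Ω_l^{m_1}) · s^{−2m_1}. -/
open MeasureTheory ProbabilityTheory Real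
open scoped ENNReal

noncomputable def nakagamiPDF (m Ω x : ℝ) : ℝ :=
  if 0 < x then 2 * Ω ^ m / Real.Gamma m * x ^ (2 * m - 1) * Real.exp (-Ω * x ^ 2) else 0

def IsNakagami {E : Type*} [MeasurableSpace E] (P : MeasureTheory.Measure E)
    (X : E → ℝ) (m Ω : ℝ) : Prop :=
  MeasureTheory.Measure.map X P =
    MeasureTheory.volume.withDensity (fun x => ENNReal.ofReal (nakagamiPDF m Ω x))

lemma measurable_nakagamiPDF (m Ω : ℝ) : Measurable (nakagamiPDF m Ω) := by
  unfold nakagamiPDF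
  refine Measurable.ite (measurableSet_Ioi (a := (0:ℝ))) ?_ measurable_const
  exact ((measurable_id.pow_const _).const_mul _).mul
    (((measurable_id.pow_const 2).const_mul (-Ω)).exp)

/-- The Nakagami law gives zero mass to nonpositive reals. -/
lemma nakagami_law_ae_pos (m Ω : ℝ) :
    ∀ᵐ x ∂(MeasureTheory.volume.withDensity
      (fun x => ENNReal.ofReal (nakagamiPDF m Ω x))), 0 < x := by
  rw [ae_iff]
  have h1 : {x : ℝ | ¬ 0 < x} = Set.Iic 0 := by ext x; simp [not_lt]
  rw [h1, withDensity_apply _ measurableSet_Iic]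
  have h2 : ∀ x ∈ Set.Iic (0:ℝ), ENNReal.ofReal (nakagamiPDF m Ω x) = 0 := by
    intro x hx
    simp [nakagamiPDF, not_lt.2 (Set.mem_Iic.1 hx)]
  rw [setLIntegral_congr_fun measurableSet_Iic h2]
  simp

lemma IsNakagami.ae_pos {E : Type*} [MeasurableSpace E] {P : Measure E} {X : E → ℝ}
    (hXm : Measurable X) {m Ω : ℝ} (h : IsNakagami P X m Ω) : ∀ᵐ ω ∂P, 0 < X ω := by
  have := nakagami_law_ae_pos m Ω
  rw [← h] at this
  exact (ae_map_iff hXm.aemeasurable (measurableSet_Ioi (a := (0:ℝ)))).1 this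

lemma lintegral_finset_prod_of_iIndep {E : Type*} [MeasurableSpace E] {P : Measure E}
    [IsProbabilityMeasure P] {ι : Type*}
    (G : ι → E → ℝ≥0∞) (hG : ∀ l, Measurable (G l))
    (hInd : ProbabilityTheory.iIndepFun G P) (t : Finset ι) :
    ∫⁻ ω, ∏ l ∈ t, G l ω ∂P = ∏ l ∈ t, ∫⁻ ω, G l ω ∂P := by
  classical
  induction t using Finset.cons_induction with
  | empty => simp
  | cons a u ha ih =>
    simp only [Finset.prod_cons]
    have hind2 : IndepFun (∏ j ∈ u, G j) (G a) P :=
      hInd.indepFun_finsetProd_of_notMem hG ha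
    have hind2' : IndepFun (fun ω => ∏ i ∈ u, G i ω) (G a) P := by
      have : (∏ j ∈ u, G j) = fun ω => ∏ i ∈ u, G i ω := by
        funext ω; simp [Finset.prod_apply]
      rwa [this] at hind2
    have hmul := lintegral_mul_eq_lintegral_mul_lintegral_of_indepFun
      (Finset.measurable_prod u (fun i _ => hG i)) (hG a) hind2'
    calc ∫⁻ ω, G a ω * ∏ l ∈ u, G l ω ∂P
        = ∫⁻ ω, ((fun ω => ∏ i ∈ u, G i ω) * G a) ω ∂P := by
          refine lintegral_congr fun ω => ?_
          simp [mul_comm]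
      _ = (∫⁻ ω, ∏ i ∈ u, G i ω ∂P) * ∫⁻ ω, G a ω ∂P := hmul
      _ = (∫⁻ ω, G a ω ∂P) * ∏ l ∈ u, ∫⁻ ω, G l ω ∂P := by
          rw [mul_comm, ← ih]

/-- Negative moment of the Nakagami law. -/
lemma nakagami_moment {m' Ω c : ℝ} (hΩ : 0 < Ω) (hc : 0 < c) (hcm : c < m') :
    ∫⁻ x, ENNReal.ofReal (x ^ (-(2*c))) ∂(MeasureTheory.volume.withDensity
        (fun x => ENNReal.ofReal (nakagamiPDF m' Ω x)))
      = ENNReal.ofReal (Ω ^ c * (Real.Gamma (m' - c) / Real.Gamma m')) := by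
  have hm' : 0 < m' := hc.trans hcm
  have hmeas : Measurable fun x : ℝ => ENNReal.ofReal (x ^ (-(2*c))) :=
    (measurable_id.pow_const _).ennreal_ofReal
  rw [lintegral_withDensity_eq_lintegral_mul _ ((measurable_nakagamiPDF m' Ω).ennreal_ofReal)
    hmeas]
  have key : (fun x => ENNReal.ofReal (nakagamiPDF m' Ω x) * ENNReal.ofReal (x ^ (-(2*c))))
      = Set.indicator (Set.Ioi 0) (fun x => ENNReal.ofReal
          ((2 * Ω ^ m' / Real.Gamma m') * (x ^ (2*m' - 2*c - 1) * Real.exp (-Ω * x ^ 2)))) := by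
    funext x
    by_cases hx : (0:ℝ) < x
    · rw [Set.indicator_of_mem (Set.mem_Ioi.2 hx), nakagamiPDF, if_pos hx,
        ← ENNReal.ofReal_mul (by positivity)]
      congr 1
      rw [show (2*m' - 2*c - 1) = (2*m' - 1) + (-(2*c)) by ring, Real.rpow_add hx]
      ring
    · rw [Set.indicator_of_notMem (by simpa using hx), nakagamiPDF, if_neg hx]
      simp
  simp only [Pi.mul_apply]
  have hstep : ∫⁻ a, ENNReal.ofReal (nakagamiPDF m' Ω a) * ENNReal.ofReal (a ^ (-(2*c)))
      = ∫⁻ x in Set.Ioi 0, ENNReal.ofReal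
          ((2 * Ω ^ m' / Real.Gamma m') * (x ^ (2*m' - 2*c - 1) * Real.exp (-Ω * x ^ 2))) := by
    rw [← lintegral_indicator measurableSet_Ioi _]
    exact lintegral_congr fun x => congrFun key x
  rw [hstep]
  have hInt : MeasureTheory.IntegrableOn
      (fun x : ℝ => (2 * Ω ^ m' / Real.Gamma m') * (x ^ (2*m'-2*c-1) * Real.exp (-Ω * x ^ 2)))
      (Set.Ioi 0) := by
    have := (integrableOn_rpow_mul_exp_neg_mul_sq hΩ (s := 2*m'-2*c-1) (by linarith)).const_mul
      (2 * Ω ^ m' / Real.Gamma m')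
    simpa [mul_assoc, IntegrableOn] using this
  rw [← MeasureTheory.ofReal_integral_eq_lintegral_ofReal hInt ?_]
  · rw [MeasureTheory.integral_const_mul]
    have hint2 : ∫ x in Set.Ioi (0:ℝ), x ^ (2*m'-2*c-1) * Real.exp (-Ω * x ^ 2)
        = Ω ^ (-(2*m'-2*c-1 + 1)/2) * (1/2) * Real.Gamma ((2*m'-2*c-1 + 1)/2) := by
      rw [← integral_rpow_mul_exp_neg_mul_rpow two_pos (by linarith) hΩ]
      refine MeasureTheory.setIntegral_congr_fun measurableSet_Ioi (fun x _ => ?_)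
      rw [show ((2:ℝ)) = ((2:ℕ):ℝ) by norm_num, Real.rpow_natCast]
    rw [hint2, show (2*m'-2*c-1 + 1)/2 = m' - c by ring, show -(2*m'-2*c-1 + 1)/2 = -(m'-c) by ring]
    congr 1
    have : 2 * Ω ^ m' / Real.Gamma m' * (Ω ^ (-(m' - c)) * (1 / 2) * Real.Gamma (m' - c))
        = (Ω ^ m' * Ω ^ (-(m' - c))) * (Real.Gamma (m' - c) / Real.Gamma m') := by ring
    rw [this, ← Real.rpow_add hΩ, show m' + -(m' - c) = c by ring]
  · filter_upwards [MeasureTheory.ae_restrict_mem measurableSet_Ioi] with x hx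
    have hx' : (0:ℝ) < x := hx
    positivity

/-- Bound on the Laplace transform of the Nakagami law. -/
lemma nakagami_laplace_le {m₁ Ω t : ℝ} (hΩ : 0 < Ω) (hm : 0 < m₁) (ht : 0 < t) :
    ∫⁻ x, ENNReal.ofReal (Real.exp (-(t * x))) ∂(MeasureTheory.volume.withDensity
        (fun x => ENNReal.ofReal (nakagamiPDF m₁ Ω x)))
      ≤ ENNReal.ofReal ((2 * Ω ^ m₁ / Real.Gamma m₁) * Real.Gamma (2*m₁) * t ^ (-(2*m₁))) := by
  have hmeas : Measurable fun x : ℝ => ENNReal.ofReal (Real.exp (-(t * x))) :=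
    (((measurable_id.const_mul t).neg).exp).ennreal_ofReal
  rw [lintegral_withDensity_eq_lintegral_mul _ ((measurable_nakagamiPDF m₁ Ω).ennreal_ofReal)
    hmeas]
  simp only [Pi.mul_apply]
  have hptwise : ∀ x : ℝ, ENNReal.ofReal (nakagamiPDF m₁ Ω x)
        * ENNReal.ofReal (Real.exp (-(t * x)))
      ≤ Set.indicator (Set.Ioi 0) (fun x => ENNReal.ofReal
          ((2 * Ω ^ m₁ / Real.Gamma m₁) * (x ^ (2*m₁ - 1) * Real.exp (-(t * x))))) x := by
    intro x
    by_cases hx : (0:ℝ) < x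
    · rw [Set.indicator_of_mem (Set.mem_Ioi.2 hx), nakagamiPDF, if_pos hx,
        ← ENNReal.ofReal_mul (by positivity)]
      apply ENNReal.ofReal_le_ofReal
      have h1 : Real.exp (-Ω * x ^ 2) ≤ 1 := by
        rw [Real.exp_le_one_iff]
        nlinarith
      have hnn : (0:ℝ) ≤ 2 * Ω ^ m₁ / Real.Gamma m₁ * x ^ (2*m₁ - 1) := by positivity
      calc 2 * Ω ^ m₁ / Real.Gamma m₁ * x ^ (2*m₁ - 1) * Real.exp (-Ω * x ^ 2)
            * Real.exp (-(t * x))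
          ≤ 2 * Ω ^ m₁ / Real.Gamma m₁ * x ^ (2*m₁ - 1) * 1 * Real.exp (-(t * x)) := by
            gcongr
        _ = 2 * Ω ^ m₁ / Real.Gamma m₁ * (x ^ (2*m₁ - 1) * Real.exp (-(t * x))) := by ring
    · rw [Set.indicator_of_notMem (by simpa using hx), nakagamiPDF, if_neg hx]
      simp
  refine le_trans (lintegral_mono hptwise) ?_
  rw [lintegral_indicator measurableSet_Ioi _]
  have hInt : MeasureTheory.IntegrableOn
      (fun x : ℝ => (2 * Ω ^ m₁ / Real.Gamma m₁) * (x ^ (2*m₁ - 1) * Real.exp (-(t * x))))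
      (Set.Ioi 0) := by
    have h0 := (integrableOn_rpow_mul_exp_neg_mul_rpow (p := 1) (s := 2*m₁ - 1) (b := t)
      (by linarith) one_pos ht)
    have h1 : MeasureTheory.IntegrableOn
        (fun x : ℝ => x ^ (2*m₁ - 1) * Real.exp (-(t * x))) (Set.Ioi 0) := by
      refine h0.congr_fun (fun x hx => ?_) measurableSet_Ioi
      simp only [Real.rpow_one]
      ring_nf
    exact h1.const_mul _
  rw [← MeasureTheory.ofReal_integral_eq_lintegral_ofReal hInt ?_]
  · apply ENNReal.ofReal_le_ofReal
    rw [MeasureTheory.integral_const_mul]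
    have hint2 : ∫ x in Set.Ioi (0:ℝ), x ^ (2*m₁ - 1) * Real.exp (-(t * x))
        = (1/t) ^ (2*m₁) * Real.Gamma (2*m₁) := by
      exact integral_rpow_mul_exp_neg_mul_Ioi (by linarith) ht
    rw [hint2, one_div, Real.inv_rpow ht.le, ← Real.rpow_neg ht.le]
    ring_nf
    exact le_refl _
  · filter_upwards [MeasureTheory.ae_restrict_mem measurableSet_Ioi] with x hx
    have hx' : (0:ℝ) < x := hx
    positivity
/-- Upper bound on the MGF of a product of independent Nakagami random variables
`X_1, …, X_L` (indexed by `Fin L`, with `X_1 = X ⟨0, hL⟩`), assuming `m_l > m_1` for `l ≥ 2`: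
for `s > 0`,
`E[exp(-s ∏ X_l)] ≤ 2 (Γ(2m_1)/Γ(m_1)) (∏_{l≥2} Γ(m_l - m_1)/Γ(m_l)) (∏ Ω_l^{m_1}) s^{-2m_1}`. -/
theorem prod_nakagami_mgf_upper_bound
    {E : Type*} [MeasurableSpace E] (P : Measure E) [IsProbabilityMeasure P]
    (L : ℕ) (hL : 0 < L)
    (m Ωp : Fin L → ℝ) (hm : ∀ l, 0 < m l) (hΩ : ∀ l, 0 < Ωp l)
    (X : Fin L → E → ℝ) (hX : ∀ l, Measurable (X l))
    (hNak : ∀ l, IsNakagami P (X l) (m l) (Ωp l))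
    (hIndep : iIndepFun X P)
    (hm1 : ∀ l, l ≠ ⟨0, hL⟩ → m ⟨0, hL⟩ < m l)
    (s : ℝ) (hs : 0 < s) :
    ∫ ω, Real.exp (-s * ∏ l, X l ω) ∂P ≤
      2 * (Real.Gamma (2 * m ⟨0, hL⟩) / Real.Gamma (m ⟨0, hL⟩)) *
        (∏ l ∈ Finset.univ.erase ⟨0, hL⟩,
          Real.Gamma (m l - m ⟨0, hL⟩) / Real.Gamma (m l)) *
        (∏ l, Ωp l ^ m ⟨0, hL⟩) * s ^ (-(2 * m ⟨0, hL⟩)) := by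
  classical
  set i0 : Fin L := (⟨0, hL⟩ : Fin L) with hi0
  set c := m i0 with hc
  have hc_pos : 0 < c := hm i0
  have hGc : 0 < Real.Gamma c := Real.Gamma_pos_of_pos hc_pos
  have hG2c : 0 < Real.Gamma (2*c) := Real.Gamma_pos_of_pos (by linarith)
  have hpos : ∀ᵐ ω ∂P, ∀ l, 0 < X l ω :=
    (MeasureTheory.ae_all_iff).2 fun l => (hNak l).ae_pos (hX l)
  set Y : E → ℝ := fun ω => ∏ l ∈ Finset.univ.erase i0, X l ω with hYdef
  have hYmeas : Measurable Y := by
    have := Finset.measurable_prod (f := X) (Finset.univ.erase i0) (fun l _ => hX l)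
    simpa [hYdef] using this
  have hYpos : ∀ᵐ ω ∂P, 0 < Y ω := hpos.mono fun ω h => Finset.prod_pos fun l _ => h l
  have hIndYX : IndepFun Y (X i0) P := by
    have h1 : IndepFun (∏ j ∈ Finset.univ.erase i0, X j) (X i0) P :=
      hIndep.indepFun_finsetProd_of_notMem hX (Finset.notMem_erase _ _)
    have h2 : (∏ j ∈ Finset.univ.erase i0, X j) = Y := by
      funext ω; simp [hYdef]
    rwa [h2] at h1
  haveI hPM1 : IsProbabilityMeasure (P.map Y) := Measure.isProbabilityMeasure_map hYmeas.aemeasurable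
  haveI hPM2 : IsProbabilityMeasure (P.map (X i0)) :=
    Measure.isProbabilityMeasure_map (hX i0).aemeasurable
  have hmap : P.map (fun ω => (Y ω, X i0 ω)) = (P.map Y).prod (P.map (X i0)) :=
    (indepFun_iff_map_prod_eq_prod_map_map hYmeas.aemeasurable (hX i0).aemeasurable).1 hIndYX
  have hFmeas : Measurable (fun p : ℝ × ℝ => ENNReal.ofReal (Real.exp (-(s * p.1 * p.2)))) :=
    ((((measurable_fst.const_mul s).mul measurable_snd).neg).exp).ennreal_ofReal
  have hemeas : Measurable (fun y : ℝ => ENNReal.ofReal (y ^ (-(2*c)))) :=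
    (measurable_id.pow_const _).ennreal_ofReal
  have hYpos' : ∀ᵐ y ∂(P.map Y), 0 < y := by
    have hset : MeasurableSet {y : ℝ | 0 < y} := measurableSet_Ioi
    rw [ae_map_iff hYmeas.aemeasurable hset]
    exact hYpos
  set A : ℝ := 2 * Ωp i0 ^ c / Real.Gamma c * Real.Gamma (2*c) with hA
  have hA_pos : 0 < A := mul_pos (div_pos (mul_pos two_pos (Real.rpow_pos_of_pos (hΩ i0) c)) hGc) hG2c
  have hAs_nonneg : (0:ℝ) ≤ A * s ^ (-(2*c)) :=
    mul_nonneg hA_pos.le (Real.rpow_nonneg hs.le _)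
  have hLap : ∀ y : ℝ, 0 < y →
      ∫⁻ x, ENNReal.ofReal (Real.exp (-(s * y * x))) ∂(P.map (X i0))
        ≤ ENNReal.ofReal (A * s ^ (-(2*c)) * y ^ (-(2*c))) := by
    intro y hy
    rw [hNak i0]
    refine le_trans (nakagami_laplace_le (hΩ i0) hc_pos (mul_pos hs hy)) ?_
    apply le_of_eq
    congr 1
    rw [Real.mul_rpow hs.le hy.le, hA]
    ring
  have hb : ∀ l ∈ Finset.univ.erase i0,
      (0:ℝ) ≤ Ωp l ^ c * (Real.Gamma (m l - c) / Real.Gamma (m l)) := by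
    intro l hl
    have h1 : 0 < Real.Gamma (m l - c) :=
      Real.Gamma_pos_of_pos (sub_pos.2 (hm1 l (Finset.mem_erase.1 hl).1))
    have h2 : 0 < Real.Gamma (m l) := Real.Gamma_pos_of_pos (hm l)
    exact mul_nonneg (Real.rpow_pos_of_pos (hΩ l) c).le (div_nonneg h1.le h2.le)
  have hMom : ∀ l ∈ Finset.univ.erase i0,
      ∫⁻ ω, ENNReal.ofReal ((X l ω) ^ (-(2*c))) ∂P
        = ENNReal.ofReal (Ωp l ^ c * (Real.Gamma (m l - c) / Real.Gamma (m l))) := by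
    intro l hl
    rw [← lintegral_map hemeas (hX l), hNak l]
    exact nakagami_moment (hΩ l) hc_pos (hm1 l (Finset.mem_erase.1 hl).1)
  have hiIndep' : ProbabilityTheory.iIndepFun
      (fun l ω => ENNReal.ofReal ((X l ω) ^ (-(2*c)))) P :=
    hIndep.comp (fun _ (x:ℝ) => ENNReal.ofReal (x ^ (-(2*c))))
      (fun _ => (measurable_id.pow_const _).ennreal_ofReal)
  have hprod : ∫⁻ ω, ∏ l ∈ Finset.univ.erase i0, ENNReal.ofReal ((X l ω) ^ (-(2*c))) ∂P
      = ∏ l ∈ Finset.univ.erase i0, ∫⁻ ω, ENNReal.ofReal ((X l ω) ^ (-(2*c))) ∂P :=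
    lintegral_finset_prod_of_iIndep _
      (fun l => ((hX l).pow_const _).ennreal_ofReal) hiIndep' _
  have hYmom : ∫⁻ y, ENNReal.ofReal (y ^ (-(2*c))) ∂(P.map Y)
      = ∏ l ∈ Finset.univ.erase i0,
          ENNReal.ofReal (Ωp l ^ c * (Real.Gamma (m l - c) / Real.Gamma (m l))) := by
    rw [lintegral_map hemeas hYmeas]
    have h1 : ∫⁻ ω, ENNReal.ofReal (Y ω ^ (-(2*c))) ∂P
        = ∫⁻ ω, ∏ l ∈ Finset.univ.erase i0, ENNReal.ofReal ((X l ω) ^ (-(2*c))) ∂P := by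
      refine lintegral_congr_ae (hpos.mono fun ω h => ?_)
      simp only [hYdef]
      rw [← Real.finset_prod_rpow (Finset.univ.erase i0) (fun l => X l ω)
        (fun l _ => (h l).le) (-(2*c))]
      rw [ENNReal.ofReal_prod_of_nonneg (fun l _ => Real.rpow_nonneg (h l).le _)]
    rw [h1, hprod]
    exact Finset.prod_congr rfl hMom
  have hPmeas : Measurable fun ω => ∏ l, X l ω := by
    have := Finset.measurable_prod (f := X) Finset.univ (fun l _ => hX l)
    simpa using this
  have hL1 : ∫ ω, Real.exp (-s * ∏ l, X l ω) ∂P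
      = (∫⁻ ω, ENNReal.ofReal (Real.exp (-s * ∏ l, X l ω)) ∂P).toReal := by
    rw [integral_eq_lintegral_of_nonneg_ae
      (MeasureTheory.ae_of_all _ fun ω => (Real.exp_pos _).le)
      (((hPmeas.const_mul (-s)).exp).aestronglyMeasurable)]
  have key : ∫⁻ ω, ENNReal.ofReal (Real.exp (-s * ∏ l, X l ω)) ∂P
      ≤ ENNReal.ofReal (A * s ^ (-(2*c))) *
          ∏ l ∈ Finset.univ.erase i0,
            ENNReal.ofReal (Ωp l ^ c * (Real.Gamma (m l - c) / Real.Gamma (m l))) := by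
    calc ∫⁻ ω, ENNReal.ofReal (Real.exp (-s * ∏ l, X l ω)) ∂P
        = ∫⁻ ω, ENNReal.ofReal (Real.exp (-(s * Y ω * X i0 ω))) ∂P := by
          refine lintegral_congr fun ω => ?_
          congr 2
          rw [← Finset.mul_prod_erase Finset.univ (fun l => X l ω) (Finset.mem_univ i0)]
          simp only [hYdef]
          ring
      _ = ∫⁻ p : ℝ × ℝ, ENNReal.ofReal (Real.exp (-(s * p.1 * p.2)))
            ∂((P.map Y).prod (P.map (X i0))) := by
          rw [← hmap, lintegral_map hFmeas (hYmeas.prodMk (hX i0))]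
      _ = ∫⁻ y, ∫⁻ x, ENNReal.ofReal (Real.exp (-(s * y * x))) ∂(P.map (X i0)) ∂(P.map Y) :=
          lintegral_prod _ hFmeas.aemeasurable
      _ ≤ ∫⁻ y, ENNReal.ofReal (A * s ^ (-(2*c))) * ENNReal.ofReal (y ^ (-(2*c)))
            ∂(P.map Y) := by
          refine lintegral_mono_ae (hYpos'.mono fun y hy => ?_)
          refine le_trans (hLap y hy) ?_
          rw [← ENNReal.ofReal_mul hAs_nonneg]
      _ = ENNReal.ofReal (A * s ^ (-(2*c))) * ∫⁻ y, ENNReal.ofReal (y ^ (-(2*c))) ∂(P.map Y) :=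
          lintegral_const_mul _ hemeas
      _ = _ := by rw [hYmom]
  have hRHS_eq : A * s ^ (-(2*c)) *
        ∏ l ∈ Finset.univ.erase i0, (Ωp l ^ c * (Real.Gamma (m l - c) / Real.Gamma (m l)))
      = 2 * (Real.Gamma (2*c) / Real.Gamma c) *
          (∏ l ∈ Finset.univ.erase i0, Real.Gamma (m l - c) / Real.Gamma (m l)) *
          (∏ l, Ωp l ^ c) * s ^ (-(2*c)) := by
    rw [Finset.prod_mul_distrib,
      ← Finset.mul_prod_erase Finset.univ (fun l => Ωp l ^ c) (Finset.mem_univ i0), hA]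
    ring
  have hval_nonneg : (0:ℝ) ≤ A * s ^ (-(2*c)) *
      ∏ l ∈ Finset.univ.erase i0, (Ωp l ^ c * (Real.Gamma (m l - c) / Real.Gamma (m l))) :=
    mul_nonneg hAs_nonneg (Finset.prod_nonneg hb)
  rw [hL1]
  refine ENNReal.toReal_le_of_le_ofReal (hRHS_eq ▸ hval_nonneg) ?_
  refine le_trans key (le_of_eq ?_)
  rw [← ENNReal.ofReal_prod_of_nonneg hb, ← ENNReal.ofReal_mul hAs_nonneg, hRHS_eq]
end

section
/- Let L ≥ 1, N ≥ 1 and let (X_{l,n})_{1≤l≤L, 1≤n≤N} be mutually independent Nakagami random variables, where X_{l,n} has shape m_{l,n} > 0 and scale Ω_{l,n} > 0, and suppose m_{l,n} > m_{1,n} for every n and every l = 2, …, L. Define H = Σ_{n=1}^N ∏_{l=1}^L X_{l,n}, t' = Σ_{n=1}^N m_{1,n}, and g = ∏_{n=1}^N [ 2 (Γ(2m_{1,n})/Γ(m_{1,n})) · (∏_{l=2}^L Γ(m_{l,n} − m_{1,n})/Γ(m_{l,n})) · ∏_{l=1}^L Ω_{l,n}^{m_{1,n}} ]. Then for every h ≥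 0, the cumulative distribution function of H satisfies P(H ≤ h) ≤ g · h^{2t'} / Γ(2t' + 1). -/
open MeasureTheory ProbabilityTheory Real
open scoped ENNReal

noncomputable def nakagamiMeasure (m Ω : ℝ) : Measure ℝ :=
  MeasureTheory.volume.withDensity (fun x => ENNReal.ofReal (nakagamiPDF m Ω x))

lemma nakagamiPDF_nonneg {m Ω : ℝ} (hm : 0 < m) (hΩ : 0 < Ω) (x : ℝ) :
    0 ≤ nakagamiPDF m Ω x := by
  unfold nakagamiPDF
  split
  · positivity
  · exact le_rfl

noncomputable def BndE (B u : ℝ) : ℝ≥0∞ :=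
  if 0 < u then ENNReal.ofReal (u ^ B / Real.Gamma (B + 1)) else 0

lemma measurable_BndE (B : ℝ) : Measurable (BndE B) :=
  Measurable.ite (measurableSet_Ioi (a := (0:ℝ)))
    (ENNReal.measurable_ofReal.comp ((measurable_id'.pow_const _).div_const _)) measurable_const

/-- real Beta integral -/
lemma real_beta {u v : ℝ} (hu : 0 < u) (hv : 0 < v) :
    ∫ x in (0:ℝ)..1, x ^ (u - 1) * (1 - x) ^ (v - 1)
      = Real.Gamma u * Real.Gamma v / Real.Gamma (u + v) := by
  have h1 : Complex.betaIntegral u v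
      = ((∫ x in (0:ℝ)..1, x ^ (u - 1) * (1 - x) ^ (v - 1) : ℝ) : ℂ) := by
    rw [Complex.betaIntegral, ← intervalIntegral.integral_ofReal]
    refine intervalIntegral.integral_congr fun x hx => ?_
    rw [Set.uIcc_of_le (by norm_num : (0:ℝ) ≤ 1)] at hx
    show (x:ℂ) ^ ((u:ℂ) - 1) * (1 - (x:ℂ)) ^ ((v:ℂ) - 1) = _
    rw [show ((x ^ (u-1) * (1-x) ^ (v-1) : ℝ) : ℂ)
        = ((x ^ (u-1) : ℝ) : ℂ) * (((1-x) ^ (v-1) : ℝ) : ℂ) by push_cast; ring,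
      Complex.ofReal_cpow hx.1, Complex.ofReal_cpow (by linarith [hx.2])]
    push_cast
    ring
  have h2 := Complex.Gamma_mul_Gamma_eq_betaIntegral
    (s := (u : ℂ)) (t := (v : ℂ)) (by simpa using hu) (by simpa using hv)
  rw [h1, ← Complex.ofReal_add, Complex.Gamma_ofReal, Complex.Gamma_ofReal,
    Complex.Gamma_ofReal, ← Complex.ofReal_mul, ← Complex.ofReal_mul] at h2
  have h3 := Complex.ofReal_inj.mp h2
  have hΓ : Real.Gamma (u + v) ≠ 0 := (Real.Gamma_pos_of_pos (by linarith)).ne'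
  field_simp
  linarith [h3]

lemma beta_rpow_integral {p B b c : ℝ} (hp : 0 < p) (hB : 0 ≤ B) (hb : 0 < b) (hc : 0 < c) :
    ∫ t in (0:ℝ)..(b/c), t ^ (p - 1) * (b - c * t) ^ B
      = c ^ (-p) * b ^ (B + p) * (Real.Gamma p * Real.Gamma (B + 1) / Real.Gamma (p + (B + 1))) := by
  have hT : 0 < b / c := div_pos hb hc
  set T := b / c with hTdef
  have hTne : T ≠ 0 := hT.ne'
  have hsub := intervalIntegral.integral_comp_mul_left
    (fun t => t ^ (p - 1) * (b - c * t) ^ B) (a := 0) (b := 1) (c := T) hTne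
  rw [mul_zero, mul_one] at hsub
  have hcongr : ∫ x in (0:ℝ)..1, (T * x) ^ (p - 1) * (b - c * (T * x)) ^ B
      = ∫ x in (0:ℝ)..1, (T ^ (p - 1) * b ^ B) * (x ^ (p - 1) * (1 - x) ^ B) := by
    refine intervalIntegral.integral_congr fun x hx => ?_
    rw [Set.uIcc_of_le (by norm_num : (0:ℝ) ≤ 1)] at hx
    have h1 : b - c * (T * x) = b * (1 - x) := by
      field_simp [hTdef]
      have hcT : c * T = b := by rw [hTdef]; field_simp
      rw [hcT]; ring
    rw [h1, Real.mul_rpow hT.le hx.1, Real.mul_rpow hb.le (by linarith [hx.2])]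
    ring
  have hbeta : ∫ x in (0:ℝ)..1, x ^ (p - 1) * (1 - x) ^ B
      = Real.Gamma p * Real.Gamma (B + 1) / Real.Gamma (p + (B + 1)) := by
    have := real_beta hp (by linarith : (0:ℝ) < B + 1)
    simpa using this
  calc ∫ t in (0:ℝ)..T, t ^ (p - 1) * (b - c * t) ^ B
      = T • ∫ x in (0:ℝ)..1, (T * x) ^ (p - 1) * (b - c * (T * x)) ^ B := by
        rw [hsub]; rw [smul_smul, mul_inv_cancel₀ hTne, one_smul]
    _ = T * ((T ^ (p - 1) * b ^ B) * (Real.Gamma p * Real.Gamma (B + 1) / Real.Gamma (p + (B + 1)))) := by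
        rw [hcongr, intervalIntegral.integral_const_mul, hbeta, smul_eq_mul]
    _ = c ^ (-p) * b ^ (B + p) * (Real.Gamma p * Real.Gamma (B + 1) / Real.Gamma (p + (B + 1))) := by
        have h1 : T * T ^ (p - 1) = T ^ p := by
          have hh := Real.rpow_add hT 1 (p - 1)
          rw [Real.rpow_one] at hh
          rw [← hh]
          ring_nf
        have h2 : T ^ p = b ^ p * c ^ (-p) := by
          rw [hTdef, Real.div_rpow hb.le hc.le, Real.rpow_neg hc.le, div_eq_mul_inv]
        have h3 : b ^ p * b ^ B = b ^ (B + p) := by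
          rw [← Real.rpow_add hb]; ring_nf
        have h4 : T * (T ^ (p - 1) * b ^ B * (Real.Gamma p * Real.Gamma (B + 1) / Real.Gamma (p + (B + 1))))
            = (T * T ^ (p - 1)) * (b ^ B * (Real.Gamma p * Real.Gamma (B + 1) / Real.Gamma (p + (B + 1)))) := by
          ring
        rw [h4, h1, h2, ← h3]
        ring

lemma nak_beta {m Ω B b c : ℝ} (hm : 0 < m) (hΩ : 0 < Ω) (hB : 0 ≤ B) :
    ∫⁻ t, BndE B (b - t * c) ∂(nakagamiMeasure m Ω) ≤
      if 0 < c then ENNReal.ofReal ((2 * Ω ^ m * Real.Gamma (2 * m) / Real.Gamma m) *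
        (if 0 < b then b ^ (B + 2 * m) / Real.Gamma (B + 2 * m + 1) else 0) * c ^ (-(2 * m)))
      else ⊤ := by
  by_cases hc : 0 < c
  swap
  · rw [if_neg hc]; exact le_top
  have hg : Measurable fun t : ℝ => BndE B (b - t * c) := by
    exact (measurable_BndE B).comp (measurable_const.sub (measurable_id.mul_const c))
  rw [if_pos hc, nakagamiMeasure, lintegral_withDensity_eq_lintegral_mul _
    (measurable_nakagamiPDF m Ω).ennreal_ofReal hg]
  by_cases hb : 0 < b
  swap
  · have hz : ∀ t, ((fun x => ENNReal.ofReal (nakagamiPDF m Ω x)) * fun t => BndE B (b - t * c)) t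
        = 0 := by
      intro t
      rcases le_or_gt t 0 with ht | ht
      · have h0 : nakagamiPDF m Ω t = 0 := by
          unfold nakagamiPDF; rw [if_neg (not_lt.mpr ht)]
        simp [h0]
      · have h0 : ¬ 0 < b - t * c := by push_neg; nlinarith
        simp only [Pi.mul_apply, BndE, if_neg h0, mul_zero]
    rw [lintegral_congr hz, lintegral_zero]
    exact zero_le
  · set K : ℝ := 2 * Ω ^ m / Real.Gamma m with hK
    have hT : 0 < b / c := div_pos hb hc
    set T : ℝ := b / c with hTdef
    set F : ℝ → ℝ := fun t => (K / Real.Gamma (B + 1)) * (t ^ (2 * m - 1) * (b - c * t) ^ B)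
      with hF
    set q : ℝ → ℝ := (Set.Ioo (0:ℝ) T).indicator F with hq
    have hKnn : (0:ℝ) ≤ K := by rw [hK]; positivity
    have hFmeas : Measurable F :=
      ((measurable_id'.pow_const _).mul
        ((measurable_const.sub (measurable_id'.const_mul c)).pow_const _)).const_mul _
    have hpt : ∀ t, ENNReal.ofReal (nakagamiPDF m Ω t) * BndE B (b - t * c)
        ≤ ENNReal.ofReal (q t) := by
      intro t
      rcases le_or_gt t 0 with ht | ht
      · have h0 : nakagamiPDF m Ω t = 0 := by
          unfold nakagamiPDF; rw [if_neg (not_lt.mpr ht)]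
        simp [h0]
      · rw [show b - t * c = b - c * t by ring]
        by_cases hbt : 0 < b - c * t
        · have htT : t ∈ Set.Ioo 0 T := ⟨ht, by rw [lt_div_iff₀ hc]; nlinarith⟩
          rw [BndE, if_pos hbt, ← ENNReal.ofReal_mul (nakagamiPDF_nonneg hm hΩ t)]
          apply ENNReal.ofReal_le_ofReal
          rw [hq, Set.indicator_of_mem htT, hF]
          unfold nakagamiPDF
          rw [if_pos ht]
          have hexp : Real.exp (-Ω * t ^ 2) ≤ 1 := by
            rw [Real.exp_le_one_iff]; nlinarith
          have h5 : (0:ℝ) ≤ t ^ (2 * m - 1) := Real.rpow_nonneg ht.le _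
          have h6 : (0:ℝ) ≤ (b - c * t) ^ B / Real.Gamma (B + 1) :=
            div_nonneg (Real.rpow_nonneg hbt.le _) (Real.Gamma_nonneg_of_nonneg (by linarith))
          calc 2 * Ω ^ m / Real.Gamma m * t ^ (2 * m - 1) * Real.exp (-Ω * t ^ 2) *
                ((b - c * t) ^ B / Real.Gamma (B + 1))
              ≤ 2 * Ω ^ m / Real.Gamma m * t ^ (2 * m - 1) * 1 *
                ((b - c * t) ^ B / Real.Gamma (B + 1)) := by
                have : (0:ℝ) ≤ 2 * Ω ^ m / Real.Gamma m * t ^ (2 * m - 1) := by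
                  rw [hK] at hKnn; exact mul_nonneg hKnn h5
                exact mul_le_mul_of_nonneg_right (mul_le_mul_of_nonneg_left hexp this) h6
            _ = K / Real.Gamma (B + 1) * (t ^ (2 * m - 1) * (b - c * t) ^ B) := by
                rw [hK]; ring
        · rw [BndE, if_neg hbt]
          simp
    calc ∫⁻ t, ((fun x => ENNReal.ofReal (nakagamiPDF m Ω x)) * fun t => BndE B (b - t * c)) t
        ≤ ∫⁻ t, ENNReal.ofReal (q t) := lintegral_mono fun t => hpt t
      _ = ENNReal.ofReal (∫ t, q t) := by
          rw [← ofReal_integral_eq_lintegral_ofReal]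
          · rw [hq]
            rw [integrable_indicator_iff measurableSet_Ioo]
            have base : IntegrableOn (fun t => t ^ (2 * m - 1)) (Set.Ioo 0 T) := by
              have h7 : IntervalIntegrable (fun t => t ^ (2 * m - 1)) volume 0 T :=
                intervalIntegral.intervalIntegrable_rpow' (by linarith)
              rwa [intervalIntegrable_iff_integrableOn_Ioo_of_le hT.le] at h7
            refine Integrable.mono' ((base.const_mul (K / Real.Gamma (B + 1) * b ^ B))) 
              hFmeas.aestronglyMeasurable ?_
            filter_upwards [ae_restrict_mem measurableSet_Ioo] with t ht
            have h8 : (0:ℝ) ≤ b - c * t := by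
              rcases ht with ⟨ht1, ht2⟩
              rw [lt_div_iff₀ hc] at ht2
              nlinarith
            have h9 : (b - c * t) ^ B ≤ b ^ B := by
              apply Real.rpow_le_rpow h8 (by nlinarith [ht.1]) hB
            have h10 : (0:ℝ) ≤ t ^ (2 * m - 1) := Real.rpow_nonneg ht.1.le _
            have h11 : (0:ℝ) ≤ K / Real.Gamma (B + 1) :=
              div_nonneg hKnn (Real.Gamma_nonneg_of_nonneg (by linarith))
            rw [hF, Real.norm_eq_abs, abs_of_nonneg
              (mul_nonneg h11 (mul_nonneg h10 (Real.rpow_nonneg h8 _)))]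
            calc K / Real.Gamma (B + 1) * (t ^ (2 * m - 1) * (b - c * t) ^ B)
                ≤ K / Real.Gamma (B + 1) * (t ^ (2 * m - 1) * b ^ B) := by
                  apply mul_le_mul_of_nonneg_left (mul_le_mul_of_nonneg_left h9 h10) h11
              _ = K / Real.Gamma (B + 1) * b ^ B * t ^ (2 * m - 1) := by ring
          · exact Filter.Eventually.of_forall fun t => Set.indicator_nonneg (fun u hu => by
              refine mul_nonneg (div_nonneg hKnn (Real.Gamma_nonneg_of_nonneg (by linarith))) ?_
              refine mul_nonneg (Real.rpow_nonneg hu.1.le _) (Real.rpow_nonneg ?_ _)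
              rcases hu with ⟨hu1, hu2⟩
              rw [lt_div_iff₀ hc] at hu2
              nlinarith) t
      _ = ENNReal.ofReal ((2 * Ω ^ m * Real.Gamma (2 * m) / Real.Gamma m) *
            (if 0 < b then b ^ (B + 2 * m) / Real.Gamma (B + 2 * m + 1) else 0) * c ^ (-(2 * m))) := by
          congr 1
          rw [hq, integral_indicator measurableSet_Ioo, ← integral_Ioc_eq_integral_Ioo,
            ← intervalIntegral.integral_of_le hT.le, hF, intervalIntegral.integral_const_mul]
          have hbeta := beta_rpow_integral (p := 2 * m) (B := B) (b := b) (c := c)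
            (by linarith) hB hb hc
          rw [← hTdef] at hbeta
          rw [hbeta, if_pos hb]
          rw [show 2 * m + (B + 1) = B + 2 * m + 1 by ring]
          have hΓ1 : Real.Gamma m ≠ 0 := (Real.Gamma_pos_of_pos hm).ne'
          have hΓ2 : Real.Gamma (B + 1) ≠ 0 := (Real.Gamma_pos_of_pos (by linarith)).ne'
          have hΓ3 : Real.Gamma (B + 2 * m + 1) ≠ 0 :=
            (Real.Gamma_pos_of_pos (by linarith)).ne'
          rw [hK]
          field_simp

lemma nak_moment {m Ω s c₂ : ℝ} (hm : 0 < m) (hΩ : 0 < Ω) (hs : 0 < s) (hsm : s < 2 * m)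
    (hc : 0 ≤ c₂) :
    ∫⁻ t, (if 0 < t then ENNReal.ofReal (c₂ * t ^ (-s)) else ⊤) ∂(nakagamiMeasure m Ω)
      ≤ ENNReal.ofReal (c₂ * (Ω ^ (s / 2) * Real.Gamma (m - s / 2) / Real.Gamma m)) := by
  have hg : Measurable fun t : ℝ => (if 0 < t then ENNReal.ofReal (c₂ * t ^ (-s)) else ⊤) :=
    Measurable.ite (measurableSet_Ioi (a := (0:ℝ)))
      (ENNReal.measurable_ofReal.comp ((measurable_id'.pow_const _).const_mul _)) measurable_const
  rw [nakagamiMeasure, lintegral_withDensity_eq_lintegral_mul _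
    (measurable_nakagamiPDF m Ω).ennreal_ofReal hg]
  set K : ℝ := 2 * Ω ^ m / Real.Gamma m with hK
  have hKnn : (0:ℝ) ≤ K := by rw [hK]; positivity
  set F : ℝ → ℝ := fun t => (K * c₂) * (t ^ (2 * m - 1 - s) * Real.exp (-Ω * t ^ 2)) with hF
  set r : ℝ → ℝ := (Set.Ioi (0:ℝ)).indicator F with hr
  have hpt : ∀ t, ((fun x => ENNReal.ofReal (nakagamiPDF m Ω x)) *
      fun t => (if 0 < t then ENNReal.ofReal (c₂ * t ^ (-s)) else ⊤)) t = ENNReal.ofReal (r t) := by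
    intro t
    simp only [Pi.mul_apply]
    rcases le_or_gt t 0 with ht | ht
    · have h0 : nakagamiPDF m Ω t = 0 := by
        unfold nakagamiPDF; rw [if_neg (not_lt.mpr ht)]
      have h1 : r t = 0 := by
        rw [hr, Set.indicator_of_notMem (by simpa using ht)]
      rw [h0, h1, ENNReal.ofReal_zero, zero_mul]
    · rw [if_pos ht, ← ENNReal.ofReal_mul (nakagamiPDF_nonneg hm hΩ t)]
      congr 1
      rw [hr, Set.indicator_of_mem (by simpa using ht)]
      show _ = K * c₂ * (t ^ (2 * m - 1 - s) * Real.exp (-Ω * t ^ 2))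
      unfold nakagamiPDF
      rw [if_pos ht, show 2 * m - 1 - s = (2 * m - 1) + (-s) by ring, Real.rpow_add ht]
      rw [hK]
      ring
  rw [lintegral_congr hpt, ← ofReal_integral_eq_lintegral_ofReal]
  · apply ENNReal.ofReal_le_ofReal
    apply le_of_eq
    rw [hr, integral_indicator measurableSet_Ioi, hF, MeasureTheory.integral_const_mul]
    have hval : ∫ t in Set.Ioi (0:ℝ), t ^ (2 * m - 1 - s) * Real.exp (-Ω * t ^ 2)
        = Ω ^ (-(2 * m - 1 - s + 1) / 2) * (1 / 2) * Real.Gamma ((2 * m - 1 - s + 1) / 2) := by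
      rw [← integral_rpow_mul_exp_neg_mul_rpow (two_pos) (by linarith : (-1:ℝ) < 2 * m - 1 - s) hΩ]
      refine setIntegral_congr_fun measurableSet_Ioi fun t ht => ?_
      rw [← Real.rpow_natCast t 2]
      norm_num
    rw [hval, show (2 * m - 1 - s + 1) / 2 = m - s / 2 by ring]
    have hΩm : Ω ^ m * Ω ^ (-(m - s / 2)) = Ω ^ (s / 2) := by
      rw [← Real.rpow_add hΩ]; ring_nf
    have hΓ1 : Real.Gamma m ≠ 0 := (Real.Gamma_pos_of_pos hm).ne'
    rw [← hΩm, hK]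
    field_simp
    ring
  · rw [hr, integrable_indicator_iff measurableSet_Ioi]
    exact (integrableOn_rpow_mul_exp_neg_mul_sq hΩ (by linarith : (-1:ℝ) < 2 * m - 1 - s)).const_mul _
  · refine Filter.Eventually.of_forall fun t => Set.indicator_nonneg (fun u hu => ?_) t
    have : (0:ℝ) < u := hu
    positivity

/-- CDF upper bound for the sum-product `H = ∑_n ∏_l X_{l,n}` of mutually independent
Nakagami random variables: for every `h ≥ 0`, `P(H ≤ h) ≤ g h^(2t') / Γ(2t' + 1)`, with
`t' = ∑_n m_{1,n}` and
`g = ∏_n [2 (Γ(2m_{1,n})/Γ(m_{1,n})) (∏_{l≥2} Γ(m_{l,n}-m_{1,n})/Γ(m_{l,n})) ∏_l Ω_{l,n}^{m_{1,n}}]`. -/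
theorem sum_prod_nakagami_cdf_upper_bound
    {E : Type*} [MeasurableSpace E] (P : Measure E) [IsProbabilityMeasure P]
    (L N : ℕ) (hL : 0 < L) (hN : 0 < N)
    (m Ωp : Fin L → Fin N → ℝ)
    (hm : ∀ l n, 0 < m l n) (hΩ : ∀ l n, 0 < Ωp l n)
    (X : Fin L → Fin N → E → ℝ) (hX : ∀ l n, Measurable (X l n))
    (hNak : ∀ l n, IsNakagami P (X l n) (m l n) (Ωp l n))
    (hIndep : iIndepFun (fun p : Fin L × Fin N => X p.1 p.2) P)
    (hm1 : ∀ n, ∀ l, l ≠ ⟨0, hL⟩ → m ⟨0, hL⟩ n < m l n)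
    (t' g : ℝ)
    (ht' : t' = ∑ n, m ⟨0, hL⟩ n)
    (hg : g = ∏ n, (2 * (Real.Gamma (2 * m ⟨0, hL⟩ n) / Real.Gamma (m ⟨0, hL⟩ n)) *
        (∏ l ∈ Finset.univ.erase ⟨0, hL⟩,
          Real.Gamma (m l n - m ⟨0, hL⟩ n) / Real.Gamma (m l n)) *
        ∏ l, Ωp l n ^ m ⟨0, hL⟩ n))
    (h : ℝ) (hh : 0 ≤ h) :
    (P {ω | ∑ n, ∏ l, X l n ω ≤ h}).toReal ≤
      g * h ^ (2 * t') / Real.Gamma (2 * t' + 1) := by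
  classical
  set z : Fin L := ⟨0, hL⟩ with hzdef
  set μ : Fin L × Fin N → Measure ℝ :=
    fun p => nakagamiMeasure (m p.1 p.2) (Ωp p.1 p.2) with hμ
  haveI hprob : ∀ p : Fin L × Fin N, IsProbabilityMeasure (μ p) := by
    intro p
    have hmp : μ p = Measure.map (X p.1 p.2) P := (hNak p.1 p.2).symm
    rw [hmp]
    exact Measure.isProbabilityMeasure_map (hX p.1 p.2).aemeasurable
  set G : Fin N → ℝ := fun n => 2 * (Real.Gamma (2 * m z n) / Real.Gamma (m z n)) *
      (∏ l ∈ Finset.univ.erase z, Real.Gamma (m l n - m z n) / Real.Gamma (m l n)) *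
      ∏ l, Ωp l n ^ m z n with hGdef
  have hGnn : ∀ n, 0 ≤ G n := by
    intro n
    have h2 : 0 < Real.Gamma (m z n) := Real.Gamma_pos_of_pos (hm z n)
    have h1 : 0 < Real.Gamma (2 * m z n) := Real.Gamma_pos_of_pos (by linarith [hm z n])
    refine mul_nonneg (mul_nonneg (by positivity) (Finset.prod_nonneg fun l hl => ?_))
      (Finset.prod_nonneg fun l _ => Real.rpow_nonneg (hΩ l n).le _)
    have hlz : l ≠ z := (Finset.mem_erase.mp hl).1
    exact le_of_lt (div_pos (Real.Gamma_pos_of_pos (by linarith [hm1 n l hlz]))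
      (Real.Gamma_pos_of_pos (hm l n)))
  set e : Fin N → Fin L → ℝ :=
    fun k l => Ωp l k ^ m z k * (Real.Gamma (m l k - m z k) / Real.Gamma (m l k)) with hedef
  have henn : ∀ k l, l ≠ z → 0 ≤ e k l := by
    intro k l hlz
    refine mul_nonneg (Real.rpow_nonneg (hΩ l k).le _) (le_of_lt (div_pos
      (Real.Gamma_pos_of_pos (by linarith [hm1 k l hlz])) (Real.Gamma_pos_of_pos (hm l k))))
  -- column tail integration
  have col2 : ∀ (k : Fin N) (c₀ : ℝ), 0 ≤ c₀ → ∀ s : Finset (Fin L), s ⊆ Finset.univ.erase z →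
      ∀ x : (Fin L × Fin N) → ℝ,
      (∫⋯∫⁻_(s.image fun l => (l, k)), (fun y =>
          if 0 < ∏ l ∈ Finset.univ.erase z, y (l, k) then
            ENNReal.ofReal (c₀ * (∏ l ∈ Finset.univ.erase z, y (l, k)) ^ (-(2 * m z k)))
          else ⊤) ∂μ) x
        ≤ if 0 < ∏ l ∈ (Finset.univ.erase z) \ s, x (l, k) then
            ENNReal.ofReal (c₀ * (∏ l ∈ s, e k l) *
              (∏ l ∈ (Finset.univ.erase z) \ s, x (l, k)) ^ (-(2 * m z k)))
          else ⊤ := by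
    intro k c₀ hc₀ s
    induction s using Finset.induction_on with
    | empty =>
        intro _ x
        simp only [Finset.image_empty, lmarginal_empty, Finset.sdiff_empty, Finset.prod_empty,
          mul_one]
        exact le_rfl
    | @insert l₀ s hl₀ IH =>
        intro hsub x
        have hl₀z : l₀ ∈ Finset.univ.erase z := hsub (Finset.mem_insert_self _ _)
        have hl₀ne : l₀ ≠ z := (Finset.mem_erase.mp hl₀z).1
        have hsub' : s ⊆ Finset.univ.erase z := fun a ha => hsub (Finset.mem_insert_of_mem ha)
        have hGmeas : Measurable (fun y : (Fin L × Fin N) → ℝ =>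
            if 0 < ∏ l ∈ Finset.univ.erase z, y (l, k) then
              ENNReal.ofReal (c₀ * (∏ l ∈ Finset.univ.erase z, y (l, k)) ^ (-(2 * m z k)))
            else ⊤) := by
          have hprod : Measurable (fun y : (Fin L × Fin N) → ℝ =>
              ∏ l ∈ Finset.univ.erase z, y (l, k)) :=
            Finset.measurable_prod _ fun l _ => measurable_pi_apply _
          exact Measurable.ite (hprod measurableSet_Ioi)
            (ENNReal.measurable_ofReal.comp ((hprod.pow_const _).const_mul _)) measurable_const
        rw [Finset.image_insert, lmarginal_insert _ hGmeas (by simp [hl₀])]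
        set R : ℝ := ∏ l ∈ (Finset.univ.erase z) \ insert l₀ s, x (l, k) with hRdef
        have hmem : l₀ ∈ (Finset.univ.erase z) \ s := Finset.mem_sdiff.mpr ⟨hl₀z, hl₀⟩
        have hersdiff : ((Finset.univ.erase z) \ s).erase l₀
            = (Finset.univ.erase z) \ insert l₀ s := by
          ext a
          simp only [Finset.mem_erase, Finset.mem_sdiff, Finset.mem_insert]
          tauto
        by_cases hRpos : 0 < R
        swap
        · rw [if_neg hRpos]; exact le_top
        · have hupdate : ∀ t : ℝ,
              ∏ l ∈ (Finset.univ.erase z) \ s, (Function.update x (l₀, k) t) (l, k) = t * R := by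
            intro t
            rw [← Finset.mul_prod_erase _ _ hmem, Function.update_self]
            congr 1
            rw [hersdiff, hRdef]
            refine Finset.prod_congr rfl fun l hl => ?_
            have hll₀ : l ≠ l₀ := by
              have := Finset.mem_sdiff.mp hl
              intro hc
              exact (this.2 (hc ▸ Finset.mem_insert_self _ _))
            exact Function.update_of_ne (by simp [Prod.ext_iff, hll₀]) _ _
          have hc₂nn : 0 ≤ c₀ * (∏ l ∈ s, e k l) * R ^ (-(2 * m z k)) := by
            refine mul_nonneg (mul_nonneg hc₀ (Finset.prod_nonneg fun l hl => henn k l ?_))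
              (Real.rpow_nonneg hRpos.le _)
            exact (Finset.mem_erase.mp (hsub' hl)).1
          calc ∫⁻ t, (∫⋯∫⁻_(s.image fun l => (l, k)), _ ∂μ) (Function.update x (l₀, k) t)
                ∂μ (l₀, k)
              ≤ ∫⁻ t, (if 0 < t then ENNReal.ofReal
                    ((c₀ * (∏ l ∈ s, e k l) * R ^ (-(2 * m z k))) * t ^ (-(2 * m z k)))
                  else ⊤) ∂μ (l₀, k) := by
                refine lintegral_mono fun t => ?_
                refine le_trans (IH hsub' (Function.update x (l₀, k) t)) ?_
                rw [hupdate t]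
                by_cases ht : 0 < t
                · rw [if_pos (mul_pos ht hRpos), if_pos ht]
                  apply ENNReal.ofReal_le_ofReal
                  rw [Real.mul_rpow ht.le hRpos.le]
                  apply le_of_eq
                  ring
                · rw [if_neg (by push_neg; push_neg at ht; nlinarith), if_neg ht]
              _ ≤ ENNReal.ofReal ((c₀ * (∏ l ∈ s, e k l) * R ^ (-(2 * m z k))) *
                    (Ωp l₀ k ^ ((2 * m z k) / 2) *
                      Real.Gamma (m l₀ k - (2 * m z k) / 2) / Real.Gamma (m l₀ k))) := by
                exact nak_moment (hm l₀ k) (hΩ l₀ k) (by linarith [hm z k])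
                  (by linarith [hm1 k l₀ hl₀ne]) hc₂nn
              _ ≤ _ := by
                rw [if_pos hRpos]
                apply ENNReal.ofReal_le_ofReal
                apply le_of_eq
                rw [show (2 * m z k) / 2 = m z k by ring, Finset.prod_insert hl₀, hedef]
                ring
  -- full column integration
  have col : ∀ (k : Fin N) (B : ℝ), 0 ≤ B → ∀ (b : ℝ) (x : (Fin L × Fin N) → ℝ),
      (∫⋯∫⁻_(Finset.univ.image fun l => (l, k)), (fun y => BndE B (b - ∏ l, y (l, k))) ∂μ) x
        ≤ ENNReal.ofReal (G k) * BndE (B + 2 * m z k) b := by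
    intro k B hB b x
    have hFmeas : Measurable (fun y : (Fin L × Fin N) → ℝ => BndE B (b - ∏ l, y (l, k))) :=
      (measurable_BndE B).comp (measurable_const.sub
        (Finset.measurable_prod _ fun l _ => measurable_pi_apply _))
    set D : ℝ := if 0 < b then b ^ (B + 2 * m z k) / Real.Gamma (B + 2 * m z k + 1) else 0
      with hDdef
    have hDnn : 0 ≤ D := by
      rw [hDdef]
      split
      · exact div_nonneg (Real.rpow_nonneg (by linarith) _)
          (Real.Gamma_nonneg_of_nonneg (by linarith [hm z k]))
      · exact le_rfl
    set c₀ : ℝ := 2 * Ωp z k ^ m z k * Real.Gamma (2 * m z k) / Real.Gamma (m z k) * D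
      with hc₀def
    have hc₀ : 0 ≤ c₀ := by
      rw [hc₀def]
      refine mul_nonneg (div_nonneg (mul_nonneg
        (mul_nonneg (by norm_num) (Real.rpow_nonneg (hΩ z k).le _))
        (Real.Gamma_nonneg_of_nonneg (by linarith [hm z k])))
        (Real.Gamma_nonneg_of_nonneg (hm z k).le)) hDnn
    have hcover : (Finset.univ.image fun l : Fin L => (l, k))
        = insert (z, k) ((Finset.univ.erase z).image fun l => (l, k)) := by
      ext p
      simp only [Finset.mem_image, Finset.mem_insert, Finset.mem_erase, Finset.mem_univ,
        true_and, and_true]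
      constructor
      · rintro ⟨l, rfl⟩
        by_cases hlz : l = z
        · subst hlz; exact Or.inl rfl
        · exact Or.inr ⟨l, hlz, rfl⟩
      · rintro (rfl | ⟨l, _, rfl⟩)
        · exact ⟨z, rfl⟩
        · exact ⟨l, rfl⟩
    rw [hcover, lmarginal_insert' _ hFmeas (by simp)]
    calc (∫⋯∫⁻_((Finset.univ.erase z).image fun l => (l, k)),
            (fun y => ∫⁻ t, BndE B (b - ∏ l, (Function.update y (z, k) t) (l, k)) ∂μ (z, k)) ∂μ) x
        ≤ (∫⋯∫⁻_((Finset.univ.erase z).image fun l => (l, k)), (fun y =>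
            if 0 < ∏ l ∈ Finset.univ.erase z, y (l, k) then
              ENNReal.ofReal (c₀ * (∏ l ∈ Finset.univ.erase z, y (l, k)) ^ (-(2 * m z k)))
            else ⊤) ∂μ) x := by
          refine lmarginal_mono (fun y => ?_) x
          have hYupd : ∀ t : ℝ, ∏ l, (Function.update y (z, k) t) (l, k)
              = t * ∏ l ∈ Finset.univ.erase z, y (l, k) := by
            intro t
            rw [← Finset.mul_prod_erase Finset.univ _ (Finset.mem_univ z),
              Function.update_self]
            congr 1
            refine Finset.prod_congr rfl fun l hl => ?_
            exact Function.update_of_ne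
              (by simp [Prod.ext_iff, (Finset.mem_erase.mp hl).1]) _ _
          calc ∫⁻ t, BndE B (b - ∏ l, (Function.update y (z, k) t) (l, k)) ∂μ (z, k)
              = ∫⁻ t, BndE B (b - t * ∏ l ∈ Finset.univ.erase z, y (l, k)) ∂μ (z, k) := by
                refine lintegral_congr fun t => by rw [hYupd t]
            _ ≤ _ := by
                have hnb := nak_beta (hm z k) (hΩ z k) hB (b := b)
                  (c := ∏ l ∈ Finset.univ.erase z, y (l, k))
                rw [hc₀def, hDdef]
                exact hnb
      _ ≤ _ := by
          refine le_trans (col2 k c₀ hc₀ (Finset.univ.erase z) le_rfl x) ?_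
          rw [Finset.sdiff_self, Finset.prod_empty, if_pos one_pos, Real.one_rpow, mul_one]
          by_cases hb : 0 < b
          · rw [BndE, if_pos hb, ← ENNReal.ofReal_mul (hGnn k)]
            apply ENNReal.ofReal_le_ofReal
            apply le_of_eq
            rw [hc₀def, hDdef, if_pos hb]
            simp only [hGdef, hedef]
            rw [show ∏ l ∈ Finset.univ.erase z,
                (Ωp l k ^ m z k * (Real.Gamma (m l k - m z k) / Real.Gamma (m l k)))
                = (∏ l ∈ Finset.univ.erase z, Ωp l k ^ m z k) *
                  ∏ l ∈ Finset.univ.erase z, (Real.Gamma (m l k - m z k) / Real.Gamma (m l k))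
              from Finset.prod_mul_distrib]
            rw [← Finset.mul_prod_erase Finset.univ (fun l => Ωp l k ^ m z k)
              (Finset.mem_univ z)]
            ring
          · rw [BndE, if_neg hb, hc₀def, hDdef, if_neg hb, mul_zero, zero_mul,
              ENNReal.ofReal_zero, mul_zero]
  -- main induction over columns
  have main : ∀ s : Finset (Fin N), ∀ A : ℝ, 0 ≤ A → ∀ (b : ℝ) (x : (Fin L × Fin N) → ℝ),
      (∫⋯∫⁻_(Finset.univ ×ˢ s), (fun y => BndE A (b - ∑ n ∈ s, ∏ l, y (l, n))) ∂μ) x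
        ≤ ENNReal.ofReal (∏ n ∈ s, G n) * BndE (A + ∑ n ∈ s, 2 * m z n) b := by
    intro s
    induction s using Finset.induction_on with
    | empty =>
        intro A hA b x
        simp only [Finset.product_empty, lmarginal_empty, Finset.sum_empty, Finset.prod_empty,
          sub_zero, add_zero, ENNReal.ofReal_one, one_mul]
        exact le_rfl
    | @insert k s hk IH =>
        intro A hA b x
        have hfmeas : Measurable (fun y : (Fin L × Fin N) → ℝ =>
            BndE A (b - ∑ n ∈ insert k s, ∏ l, y (l, n))) :=
          (measurable_BndE A).comp (measurable_const.sub (Finset.measurable_sum _ fun n _ =>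
            Finset.measurable_prod _ fun l _ => measurable_pi_apply _))
        have hsplit : (Finset.univ ×ˢ insert k s)
            = (Finset.univ.image fun l : Fin L => (l, k)) ∪ (Finset.univ ×ˢ s) := by
          ext p
          simp only [Finset.mem_product, Finset.mem_insert, Finset.mem_union, Finset.mem_image,
            Finset.mem_univ, true_and]
          constructor
          · rintro (hpk | hps)
            · exact Or.inl ⟨p.1, by rw [← hpk]⟩
            · exact Or.inr hps
          · rintro (⟨l, rfl⟩ | hps)
            · exact Or.inl rfl
            · exact Or.inr hps
        have hdisj : Disjoint (Finset.univ.image fun l : Fin L => (l, k))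
            (Finset.univ ×ˢ s) := by
          rw [Finset.disjoint_left]
          rintro ⟨l, n⟩ him hpr
          simp only [Finset.mem_image, Finset.mem_univ, true_and, Prod.mk.injEq] at him
          obtain ⟨l', _, rfl⟩ := him
          exact hk (Finset.mem_product.mp hpr).2
        have hAs : 0 ≤ A + ∑ n ∈ s, 2 * m z n :=
          add_nonneg hA (Finset.sum_nonneg fun n _ => by linarith [hm z n])
        rw [hsplit, lmarginal_union μ _ hfmeas hdisj]
        calc (∫⋯∫⁻_(Finset.univ.image fun l : Fin L => (l, k)),
                (∫⋯∫⁻_(Finset.univ ×ˢ s),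
                  (fun y => BndE A (b - ∑ n ∈ insert k s, ∏ l, y (l, n))) ∂μ) ∂μ) x
            ≤ (∫⋯∫⁻_(Finset.univ.image fun l : Fin L => (l, k)), (fun y =>
                ENNReal.ofReal (∏ n ∈ s, G n) *
                  BndE (A + ∑ n ∈ s, 2 * m z n) ((b - ∏ l, y (l, k)))) ∂μ) x := by
              refine lmarginal_mono (fun y => ?_) x
              have hfreeze : (∫⋯∫⁻_(Finset.univ ×ˢ s),
                  (fun y' => BndE A (b - ∑ n ∈ insert k s, ∏ l, y' (l, n))) ∂μ) y
                  = (∫⋯∫⁻_(Finset.univ ×ˢ s),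
                  (fun y' => BndE A ((b - ∏ l, y (l, k)) - ∑ n ∈ s, ∏ l, y' (l, n))) ∂μ) y := by
                refine lintegral_congr fun w => ?_
                simp only []
                have hup : ∀ l : Fin L,
                    Function.updateFinset y (Finset.univ ×ˢ s) w (l, k) = y (l, k) := by
                  intro l
                  rw [Function.updateFinset]
                  exact dif_neg fun hmem => hk (Finset.mem_product.mp hmem).2
                have hprodeq : ∏ l, Function.updateFinset y (Finset.univ ×ˢ s) w (l, k)
                    = ∏ l, y (l, k) := Finset.prod_congr rfl fun l _ => hup l
                rw [Finset.sum_insert hk, hprodeq, sub_add_eq_sub_sub]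
              rw [hfreeze]
              exact IH A hA _ y
          _ = ENNReal.ofReal (∏ n ∈ s, G n) *
              (∫⋯∫⁻_(Finset.univ.image fun l : Fin L => (l, k)), (fun y =>
                BndE (A + ∑ n ∈ s, 2 * m z n) ((b - ∏ l, y (l, k)))) ∂μ) x := by
              simp only [lmarginal]
              rw [lintegral_const_mul']
              exact ENNReal.ofReal_ne_top
          _ ≤ ENNReal.ofReal (∏ n ∈ s, G n) *
              (ENNReal.ofReal (G k) * BndE ((A + ∑ n ∈ s, 2 * m z n) + 2 * m z k) b) :=
              mul_le_mul_right (col k _ hAs b x) _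
          _ = ENNReal.ofReal (∏ n ∈ insert k s, G n) *
              BndE (A + ∑ n ∈ insert k s, 2 * m z n) b := by
              rw [← mul_assoc, ← ENNReal.ofReal_mul (Finset.prod_nonneg fun n _ => hGnn n),
                Finset.prod_insert hk, Finset.sum_insert hk]
              congr 2
              · ring
              · ring
  -- transfer to the product measure
  have hTmeas : Measurable (fun ω => (fun p : Fin L × Fin N => X p.1 p.2 ω)) :=
    measurable_pi_lambda _ fun p => hX p.1 p.2
  have hmap : Measure.map (fun ω (p : Fin L × Fin N) => X p.1 p.2 ω) P = Measure.pi μ := by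
    refine (Measure.pi_eq fun sets hsets => ?_).symm
    rw [Measure.map_apply hTmeas (MeasurableSet.univ_pi hsets)]
    have hpre : (fun ω (p : Fin L × Fin N) => X p.1 p.2 ω) ⁻¹' (Set.univ.pi sets)
        = ⋂ p ∈ (Finset.univ : Finset (Fin L × Fin N)), X p.1 p.2 ⁻¹' sets p := by
      ext ω
      simp [Set.mem_pi]
    rw [hpre, hIndep.measure_inter_preimage_eq_mul Finset.univ (fun p _ => hsets p)]
    refine Finset.prod_congr rfl fun p _ => ?_
    rw [← Measure.map_apply (hX p.1 p.2) (hsets p)]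
    congr 1
    exact hNak p.1 p.2
  have hW : Measurable fun y : (Fin L × Fin N) → ℝ => ∑ n, ∏ l, y (l, n) :=
    Finset.measurable_sum _ fun n _ => Finset.measurable_prod _ fun l _ => measurable_pi_apply _
  have hg0 : 0 ≤ g := by
    rw [hg]
    exact Finset.prod_nonneg fun n _ => hGnn n
  have hΓt : 0 < Real.Gamma (2 * t' + 1) := by
    refine Real.Gamma_pos_of_pos ?_
    have : 0 < t' := by
      rw [ht']
      exact Finset.sum_pos (fun n _ => hm z n) ⟨⟨0, hN⟩, Finset.mem_univ _⟩
    linarith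
  have ht'pos : 0 < t' := by
    rw [ht']
    exact Finset.sum_pos (fun n _ => hm z n) ⟨⟨0, hN⟩, Finset.mem_univ _⟩
  have hPle : ∀ b : ℝ, h < b →
      (P {ω | ∑ n, ∏ l, X l n ω ≤ h}).toReal ≤ g * b ^ (2 * t') / Real.Gamma (2 * t' + 1) := by
    intro b hhb
    have hb0 : 0 < b := lt_of_le_of_lt hh hhb
    have hevent : {ω | ∑ n, ∏ l, X l n ω ≤ h}
        = (fun ω (p : Fin L × Fin N) => X p.1 p.2 ω) ⁻¹'
          ((fun y : (Fin L × Fin N) → ℝ => ∑ n, ∏ l, y (l, n)) ⁻¹' Set.Iic h) := by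
      ext ω
      simp [Set.mem_Iic]
    have hP : P {ω | ∑ n, ∏ l, X l n ω ≤ h}
        = Measure.pi μ ((fun y : (Fin L × Fin N) → ℝ => ∑ n, ∏ l, y (l, n)) ⁻¹' Set.Iic h) := by
      rw [hevent, ← Measure.map_apply hTmeas (hW measurableSet_Iic), hmap]
    have hbound : Measure.pi μ ((fun y : (Fin L × Fin N) → ℝ => ∑ n, ∏ l, y (l, n)) ⁻¹' Set.Iic h)
        ≤ ENNReal.ofReal (g * (b ^ (2 * t') / Real.Gamma (2 * t' + 1))) := by
      calc Measure.pi μ ((fun y : (Fin L × Fin N) → ℝ => ∑ n, ∏ l, y (l, n)) ⁻¹' Set.Iic h)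
          = ∫⁻ y, ((fun y : (Fin L × Fin N) → ℝ => ∑ n, ∏ l, y (l, n)) ⁻¹'
              Set.Iic h).indicator 1 y ∂Measure.pi μ :=
            (lintegral_indicator_one (hW measurableSet_Iic)).symm
        _ ≤ ∫⁻ y, BndE 0 (b - ∑ n, ∏ l, y (l, n)) ∂Measure.pi μ := by
            refine lintegral_mono fun y => ?_
            by_cases hy : y ∈ (fun y : (Fin L × Fin N) → ℝ => ∑ n, ∏ l, y (l, n)) ⁻¹' Set.Iic h
            · rw [Set.indicator_of_mem hy]
              have hyh : ∑ n, ∏ l, y (l, n) ≤ h := hy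
              have hB1 : BndE 0 (b - ∑ n, ∏ l, y (l, n)) = 1 := by
                rw [BndE, if_pos (by linarith)]
                norm_num [Real.Gamma_one]
              rw [hB1]
              simp
            · rw [Set.indicator_of_notMem hy]
              exact zero_le
        _ ≤ ENNReal.ofReal (g * (b ^ (2 * t') / Real.Gamma (2 * t' + 1))) := by
            rw [lintegral_eq_lmarginal_univ (fun _ => (0:ℝ)),
              show (Finset.univ : Finset (Fin L × Fin N)) = Finset.univ ×ˢ Finset.univ from
                Finset.univ_product_univ.symm]
            refine le_trans (main Finset.univ 0 le_rfl b _) ?_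
            rw [zero_add, show ∑ n : Fin N, 2 * m z n = 2 * t' by rw [ht', Finset.mul_sum],
              BndE, if_pos hb0, ← ENNReal.ofReal_mul (by rw [← hg]; exact hg0)]
            apply le_of_eq
            congr 1
            rw [← hg]
    rw [hP]
    have := ENNReal.toReal_mono (by simp) hbound
    refine le_trans this ?_
    rw [ENNReal.toReal_ofReal (by positivity)]
    rw [mul_div_assoc]
  have hcont : Filter.Tendsto (fun b : ℝ => g * b ^ (2 * t') / Real.Gamma (2 * t' + 1))
      (nhdsWithin h (Set.Ioi h)) (nhds (g * h ^ (2 * t') / Real.Gamma (2 * t' + 1))) := by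
    have h1 : ContinuousAt (fun b : ℝ => b ^ (2 * t')) h :=
      Real.continuousAt_rpow_const h _ (Or.inr (by linarith))
    exact (((continuousAt_const.mul h1).div_const _).tendsto).mono_left nhdsWithin_le_nhds
  refine ge_of_tendsto hcont ?_
  filter_upwards [self_mem_nhdsWithin] with b hb
  exact hPle b hb
end
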